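/- Define d(R) = T/ℓ − 1/s − C(R,ε)/f_cpu and φ(R) = (1/f_cpu)·g(1/(d(R)·R)) + (1/(R²·ε·e^{εR}))·f′(1/(d(R)·R)), where g(x) = f(x) − x·f′(x) and f′(x) = (N₀·ln 2/B)·2^{x/B}, and suppose d(R) > 0 for all R ∈ [1, R_max]. If two sensors have the same channel gain h > 0 but per-cycle compression energies q₁ ≥ q₂ > 0, and their compression ratios R₁, R₂ ∈ [1, R_max] satisfy φ(R₁) = q₁·h and φ(R₂) = q₂·h, then R₁ ≤ R₂. -/

import Mathlib

set_option maxHeartbeats 2000000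


open Real Set

/-- If two sensors share the channel gain `h > 0` but have per-cycle
compression energies `q₁ ≥ q₂ > 0`, and their compression ratios satisfy the
first-order optimality condition `φ(Rᵢ) = qᵢ h` of Problem P1-B, then
`R₁ ≤ R₂`.  Here `f(x) = N₀(2^{x/B}−1)`, `f′(x) = (N₀ ln 2/B) 2^{x/B}`,
`g(x) = f(x) − x f′(x)`, `C(R,ε) = e^{εR} − e^{ε}`, and
`d(R) = T/ℓ − 1/s − C(R,ε)/f_cpu` is assumed positive on `[1, R_max]`. -/
theorem compression_energy_monotone_compression
    (N0 B fcpu s T ℓ ε Rmax : ℝ)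
    (hN0 : 0 < N0) (hB : 0 < B)
    (hfcpu : 0 < fcpu) (hs : 0 < s) (hT : 0 < T) (hℓ : 0 < ℓ)
    (hε : 0 < ε) (hRmax : 1 ≤ Rmax)
    (f' g d φ : ℝ → ℝ)
    (hf' : ∀ x, f' x = N0 * Real.log 2 / B * (2 : ℝ) ^ (x / B))
    (hg : ∀ x, g x = N0 * ((2 : ℝ) ^ (x / B) - 1) - x * f' x)
    (hd : ∀ R, d R = T / ℓ - 1 / s - (Real.exp (ε * R) - Real.exp ε) / fcpu)
    (hφ : ∀ R, φ R =
      (1 / fcpu) * g (1 / (d R * R))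
        + (1 / (R ^ 2 * ε * Real.exp (ε * R))) * f' (1 / (d R * R)))
    (hdpos : ∀ R ∈ Icc 1 Rmax, 0 < d R)
    (h q₁ q₂ R₁ R₂ : ℝ)
    (hh : 0 < h) (hq₂ : 0 < q₂) (hq : q₁ ≥ q₂)
    (hR₁ : R₁ ∈ Icc 1 Rmax) (hR₂ : R₂ ∈ Icc 1 Rmax)
    (hopt₁ : φ R₁ = q₁ * h) (hopt₂ : φ R₂ = q₂ * h) :
    R₁ ≤ R₂ := by
  -- concrete versions of d and φ
  set dd : ℝ → ℝ := fun r => T / ℓ - 1 / s - (Real.exp (ε * r) - Real.exp ε) / fcpu with hdd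
  set ψ : ℝ → ℝ := fun r =>
      fcpu⁻¹ * (N0 * ((2 : ℝ) ^ ((dd r * r)⁻¹ / B) - 1)
          - (dd r * r)⁻¹ * (N0 * Real.log 2 / B * (2 : ℝ) ^ ((dd r * r)⁻¹ / B)))
        + (r ^ 2 * ε * Real.exp (ε * r))⁻¹ *
            (N0 * Real.log 2 / B * (2 : ℝ) ^ ((dd r * r)⁻¹ / B)) with hψ
  have hφψ : ∀ r, φ r = ψ r := by
    intro r
    simp only [hφ, hg, hf', hd, hψ, hdd, one_div]
  have hlog2 : 0 < Real.log 2 := Real.log_pos (by norm_num)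
  -- derivative of ψ at every point of the interval
  have key : ∀ y ∈ Icc (1:ℝ) Rmax,
      HasDerivAt ψ
        (-(N0 * (Real.log 2 / B) * (2 : ℝ) ^ ((dd y * y)⁻¹ / B) / (ε * Real.exp (ε * y))) *
          ((Real.log 2 / B) * ((dd y * y)⁻¹) ^ 3 * y *
              (ε * Real.exp (ε * y) / fcpu - dd y / y) ^ 2
            + (2 + ε * y) / y ^ 3)) y := by
    intro y hy
    have hy0 : 0 < y := lt_of_lt_of_le one_pos hy.1
    have hD : 0 < dd y := by
      have := hdpos y hy
      rwa [hd] at this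
    have hMne : dd y * y ≠ 0 := by positivity
    have hE : HasDerivAt (fun r => Real.exp (ε * r)) (Real.exp (ε * y) * ε) y := by
      simpa using (((hasDerivAt_id y).const_mul ε).exp)
    have hddD : HasDerivAt dd (-(Real.exp (ε * y) * ε / fcpu)) y := by
      exact ((hE.sub_const (Real.exp ε)).div_const fcpu).const_sub (T / ℓ - 1 / s)
    have hM : HasDerivAt (fun r => dd r * r)
        (-(Real.exp (ε * y) * ε / fcpu) * y + dd y * 1) y := by
      exact hddD.mul (hasDerivAt_id y)
    have hx : HasDerivAt (fun r => (dd r * r)⁻¹)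
        (-(-(Real.exp (ε * y) * ε / fcpu) * y + dd y * 1) / (dd y * y) ^ 2) y :=
      hM.inv hMne
    have hw : HasDerivAt (fun r => (dd r * r)⁻¹ / B)
        ((-(-(Real.exp (ε * y) * ε / fcpu) * y + dd y * 1) / (dd y * y) ^ 2) / B) y :=
      hx.div_const B
    have hA : HasDerivAt (fun r => (2 : ℝ) ^ ((dd r * r)⁻¹ / B))
        ((2 : ℝ) ^ ((dd y * y)⁻¹ / B) * Real.log 2 *
          ((-(-(Real.exp (ε * y) * ε / fcpu) * y + dd y * 1) / (dd y * y) ^ 2) / B)) y := by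
      exact ((hasStrictDerivAt_const_rpow (by norm_num : (0:ℝ) < 2)
        ((dd y * y)⁻¹ / B)).hasDerivAt).comp y hw
    have t1a : HasDerivAt (fun r => N0 * ((2 : ℝ) ^ ((dd r * r)⁻¹ / B) - 1))
        (N0 * ((2 : ℝ) ^ ((dd y * y)⁻¹ / B) * Real.log 2 *
          ((-(-(Real.exp (ε * y) * ε / fcpu) * y + dd y * 1) / (dd y * y) ^ 2) / B))) y :=
      (hA.sub_const 1).const_mul N0
    have hc2A : HasDerivAt (fun r => N0 * Real.log 2 / B * (2 : ℝ) ^ ((dd r * r)⁻¹ / B))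
        (N0 * Real.log 2 / B * ((2 : ℝ) ^ ((dd y * y)⁻¹ / B) * Real.log 2 *
          ((-(-(Real.exp (ε * y) * ε / fcpu) * y + dd y * 1) / (dd y * y) ^ 2) / B))) y :=
      hA.const_mul _
    have t1b := hx.mul hc2A
    have t1 := ((t1a.sub t1b).const_mul fcpu⁻¹)
    have hWb : HasDerivAt (fun r => r ^ 2 * ε * Real.exp (ε * r))
        ((↑2 * y ^ 1 * ε) * Real.exp (ε * y) + y ^ 2 * ε * (Real.exp (ε * y) * ε)) y := by
      exact ((hasDerivAt_pow 2 y).mul_const ε).mul hE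
    have hWbne : y ^ 2 * ε * Real.exp (ε * y) ≠ 0 := by positivity
    have hW := hWb.inv hWbne
    have t2 := hW.mul hc2A
    have total := t1.add t2
    refine total.congr_deriv ?_
    simp only [Pi.inv_apply]
    set L := Real.log 2 with hL
    set A := (2:ℝ) ^ ((dd y * y)⁻¹ / B) with hA2
    set E := Real.exp (ε * y) with hE2
    set D := dd y with hD2
    have hD0 : D ≠ 0 := ne_of_gt hD
    have hE0 : E ≠ 0 := by rw [hE2]; exact Real.exp_ne_zero _
    have hy0' : y ≠ 0 := ne_of_gt hy0
    have hB0 : B ≠ 0 := ne_of_gt hB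
    have hf0 : fcpu ≠ 0 := ne_of_gt hfcpu
    have hε0 : ε ≠ 0 := ne_of_gt hε
    clear_value L A E D
    push_cast
    field_simp
    ring
  have hanti : StrictAntiOn ψ (Icc 1 Rmax) := by
    apply strictAntiOn_of_deriv_neg (convex_Icc _ _)
    · exact fun y hy => ((key y hy).continuousAt).continuousWithinAt
    · intro y hy
      rw [interior_Icc] at hy
      have hy' : y ∈ Icc (1:ℝ) Rmax := Ioo_subset_Icc_self hy
      rw [(key y hy').deriv]
      have hy0 : 0 < y := lt_of_lt_of_le one_pos hy'.1
      have hD : 0 < dd y := by have := hdpos y hy'; rwa [hd] at this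
      have hA : (0:ℝ) < (2 : ℝ) ^ ((dd y * y)⁻¹ / B) := Real.rpow_pos_of_pos (by norm_num) _
      have hEpos : 0 < Real.exp (ε * y) := Real.exp_pos _
      have hS : 0 < (Real.log 2 / B) * ((dd y * y)⁻¹) ^ 3 * y *
              (ε * Real.exp (ε * y) / fcpu - dd y / y) ^ 2
            + (2 + ε * y) / y ^ 3 := by positivity
      have hC : 0 < N0 * (Real.log 2 / B) * (2 : ℝ) ^ ((dd y * y)⁻¹ / B) /
          (ε * Real.exp (ε * y)) := by positivity
      nlinarith [mul_pos hC hS]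
  by_contra hcon
  push_neg at hcon
  have hlt : ψ R₁ < ψ R₂ := hanti hR₂ hR₁ hcon
  rw [← hφψ, ← hφψ, hopt₁, hopt₂] at hlt
  have : q₂ * h ≤ q₁ * h := mul_le_mul_of_nonneg_right hq hh.le
  linarith
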